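/- Let n ≥ 2 and let K_n be the complete directed graph on {1,…,n}, with an edge in each direction between every pair of distinct vertices, and fix a total ordering of the vertices. Then for every subset W ⊆ {1,…,n} with 1 ≤ |W| = k ≤ n−1 and every w ∈ W, the multiplicity satisfies m(W,w) = (k−1)·(n−1)^{n−k−1}. -/

import Mathlib

open Classical Finset

noncomputable section

variable {V : Type*} {R : Type*} [CommRing R]

/-- An oriented spanning tree of the digraph `E` on `V`: `root` has outdegree 0
(convention `out root = root`), every other vertex `v` has a unique outgoing edge
`(v, out v)` which is an edge of the graph, and iterating `out` from any vertex
reaches the root (no cycles). -/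
structure SpTree [Fintype V] (E : V → V → Prop) where
  root : V
  out : V → V
  out_root : out root = root
  edge_mem : ∀ v, v ≠ root → E v (out v)
  reach : ∀ v, ∃ n, out^[n] v = root

theorem SpTree.ext' [Fintype V] {E : V → V → Prop} {a b : SpTree E}
    (h1 : a.root = b.root) (h2 : a.out = b.out) : a = b := by
  cases a; cases b; dsimp at h1 h2; subst h1; subst h2; rfl

noncomputable instance [Fintype V] (E : V → V → Prop) : Fintype (SpTree E) :=
  Fintype.ofInjective (fun a => (a.root, a.out)) fun a b h =>
    SpTree.ext' (congrArg Prod.fst h) (congrArg Prod.snd h)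

/-- An oriented forest of the digraph `E`, rooted in the set `U`. -/
structure SpForest [Fintype V] (E : V → V → Prop) (U : Finset V) where
  out : V → V
  out_root : ∀ v ∈ U, out v = v
  edge_mem : ∀ v, v ∉ U → E v (out v)
  reach : ∀ v, ∃ n, out^[n] v ∈ U

theorem SpForest.ext' [Fintype V] {E : V → V → Prop} {U : Finset V} {a b : SpForest E U}
    (h : a.out = b.out) : a = b := by
  cases a; cases b; dsimp at h; subst h; rfl

noncomputable instance [Fintype V] (E : V → V → Prop) (U : Finset V) :
    Fintype (SpForest E U) :=
  Fintype.ofInjective SpForest.out fun _ _ h => SpForest.ext' h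

/-- The adjacency relation of the tree graph `𝒯G`: there is an edge from `a` to `b`
if `b` is obtained from `a` by adding the edge `(a.root, b.root)` of `G` and deleting
the edge of `a` going out of `b.root`. -/
def TStep [Fintype V] (E : V → V → Prop) (a b : SpTree E) : Prop :=
  E a.root b.root ∧ a.root ≠ b.root ∧ b.out a.root = b.root ∧
    ∀ v, v ≠ a.root → v ≠ b.root → b.out v = a.out v

/-- The set `W` is strongly connected in the digraph `E` (for the induced subgraph). -/
def SConn (E : V → V → Prop) (W : Set V) : Prop :=
  ∀ u ∈ W, ∀ v ∈ W, Relation.ReflTransGen (fun a b => E a b ∧ a ∈ W ∧ b ∈ W) u v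

/-- Edge-weighted Laplacian matrix of the digraph `E`, with weight `x (v,w)` on the
edge from `v` to `w`. -/
def lapM [Fintype V] (E : V → V → Prop) (x : V × V → R) : Matrix V V R :=
  Matrix.of fun v w =>
    if v = w then -(∑ u ∈ univ.filter (fun u => E v u), x (v, u))
    else if E v w then x (v, w) else 0

/-- Schrödinger operator `L = Q + Y` with potential `y`. -/
def schrM [Fintype V] (E : V → V → Prop) (x : V × V → R) (y : V → R) : Matrix V V R :=
  lapM E x + Matrix.diagonal y

/-- Weighted adjacency matrix. -/
def adjM [Fintype V] (E : V → V → Prop) (x : V × V → R) : Matrix V V R :=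
  Matrix.of fun v w => if E v w then x (v, w) else 0

/-- Submatrix keeping rows and columns indexed by `W`. -/
def subM [Fintype V] (M : Matrix V V R) (W : Finset V) :
    Matrix {v // v ∈ W} {v // v ∈ W} R :=
  M.submatrix Subtype.val Subtype.val

/-- The lifted edge weights on the tree graph: the edge from `a` to `b` in `𝒯G`
carries the weight of the edge of `G` from `a.root` to `b.root`. -/
def xT [Fintype V] (E : V → V → Prop) (x : V × V → R) : SpTree E × SpTree E → R :=
  fun p => x (p.1.root, p.2.root)

/-- The lifted potential on the tree graph. -/
def yT [Fintype V] (E : V → V → Prop) (y : V → R) : SpTree E → R :=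
  fun a => y a.root

/-- Weight `π_𝐚` of a spanning tree: product of its edge weights. -/
def treeWt [Fintype V] {E : V → V → Prop} (x : V × V → R) (a : SpTree E) : R :=
  ∏ v ∈ univ.filter (fun v => v ≠ a.root), x (v, a.out v)

/-- Generating polynomial of the oriented spanning trees of `E`. -/
def FGpoly [Fintype V] (E : V → V → Prop) (x : V × V → R) : R :=
  ∑ a : SpTree E, treeWt x a

/-- Weight `π_𝐟` of a forest: product of its edge weights. -/
def forestWt [Fintype V] {E : V → V → Prop} {U : Finset V} (x : V × V → R)
    (f : SpForest E U) : R :=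
  ∏ v ∈ univ.filter (fun v => v ∉ U), x (v, f.out v)

/-- Generating polynomial `Ψ_U` of the oriented forests of `E` rooted in `U`. -/
def PsiF [Fintype V] (E : V → V → Prop) (U : Finset V) (x : V × V → R) : R :=
  ∑ f : SpForest E U, forestWt x f

/-- Generating polynomial of the oriented spanning trees of the tree graph `𝒯G`. -/
def FTGpoly [Fintype V] (E : V → V → Prop) (x : V × V → R) : R :=
  FGpoly (TStep E) (xT E x)

/-- The polynomial ring `ℂ[x_e (e ∈ V × V), y_v (v ∈ V)]`. -/
abbrev Rng (V : Type*) := MvPolynomial ((V × V) ⊕ V) ℂ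

/-- The edge variable `x_e`. -/
def xv {V : Type*} : V × V → Rng V := fun e => MvPolynomial.X (Sum.inl e)

/-- The vertex variable `y_v`. -/
def yv {V : Type*} : V → Rng V := fun v => MvPolynomial.X (Sum.inr v)

/-! ### The exploration algorithm -/

/-- The state of the exploration algorithm: a set `A` of explored vertices, a FIFO
list `Lq` of edges to be examined, a reservoir `F` of edges, and the set `Er` of
erased vertices. -/
structure ExpState (V : Type*) where
  A : Finset V
  Lq : List (V × V)
  F : Finset (V × V)
  Er : Finset V

/-- The list of the edges of `S` with target `w`, ordered by increasing source. -/
def sortedTo (ord : LinearOrder V) (S : Finset (V × V)) (w : V) : List (V × V) :=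
  letI := ord
  (((S.filter (fun f => f.2 = w)).image Prod.fst).sort (· ≤ ·)).map fun u => (u, w)

/-- The edge `e` belongs to the tree `a`. -/
def inTree [Fintype V] {E : V → V → Prop} (a : SpTree E) (e : V × V) : Prop :=
  e.1 ≠ a.root ∧ a.out e.1 = e.2

/-- One iteration of the exploration algorithm: pick the first edge `e` of the list,
with source `w`; if `e` belongs to the tree then add `w` to `A`, delete all edges with
source `w` from the list, and append the edges of `F` with target `w` by increasing
source; otherwise erase `w`, deleting all edges with source or target `w` from the
list and from `F`. -/
def expStep [Fintype V] {E : V → V → Prop} (ord : LinearOrder V) (a : SpTree E)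
    (s : ExpState V) : ExpState V :=
  match s.Lq with
  | [] => s
  | e :: rest =>
    if inTree a e then
      { A := insert e.1 s.A
        Lq := rest.filter (fun f => decide (f.1 ≠ e.1)) ++ sortedTo ord s.F e.1
        F := s.F
        Er := s.Er }
    else
      { A := s.A
        Lq := rest.filter (fun f => decide (f.1 ≠ e.1 ∧ f.2 ≠ e.1))
        F := s.F.filter (fun f => f.1 ≠ e.1 ∧ f.2 ≠ e.1)
        Er := insert e.1 s.Er }

/-- The initial state of the exploration algorithm run on a tree rooted at `v`:
`A = {v}`, the list consists of the edges with target `v` by increasing source, and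
`F` is the set of edges with source `≠ v`. -/
def expInit [Fintype V] {E : V → V → Prop} (ord : LinearOrder V) (a : SpTree E) :
    ExpState V :=
  letI := ord
  { A := {a.root}
    Lq := ((univ.filter (fun u => E u a.root)).sort (· ≤ ·)).map fun u => (u, a.root)
    F := univ.filter fun f : V × V => E f.1 f.2 ∧ f.1 ≠ a.root
    Er := (∅ : Finset V) }

/-- The final state of the exploration algorithm (the number of iterations below is
large enough for the list to be exhausted, after which the state no longer moves). -/
def expRun [Fintype V] {E : V → V → Prop} (ord : LinearOrder V) (a : SpTree E) :
    ExpState V :=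
  (expStep ord a)^[2 * Fintype.card (V × V) + 1] (expInit ord a)

/-- The set `φ(𝐚)` of explored vertices. -/
def expPhi [Fintype V] {E : V → V → Prop} (ord : LinearOrder V) (a : SpTree E) : Finset V :=
  (expRun ord a).A

/-- The set of erased vertices. -/
def expEr [Fintype V] {E : V → V → Prop} (ord : LinearOrder V) (a : SpTree E) : Finset V :=
  (expRun ord a).Er

/-- The set `ψ(𝐚)`: the strongly connected component of the root in the subgraph
induced on `φ(𝐚)`. -/
def expPsi [Fintype V] {E : V → V → Prop} (ord : LinearOrder V) (a : SpTree E) : Finset V :=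
  univ.filter fun u => u ∈ expPhi ord a ∧
    Relation.ReflTransGen
      (fun p q => E p q ∧ p ∈ expPhi ord a ∧ q ∈ expPhi ord a) a.root u ∧
    Relation.ReflTransGen
      (fun p q => E p q ∧ p ∈ expPhi ord a ∧ q ∈ expPhi ord a) u a.root

/-- The multiplicity `m(W, w)`: the number of oriented spanning trees `𝐚` rooted at
`w` with `ψ(𝐚) = W`. -/
def multCount [Fintype V] (E : V → V → Prop) (ord : LinearOrder V) (W : Finset V)
    (w : V) : ℕ :=
  Nat.card {a : SpTree E // a.root = w ∧ expPsi ord a = W}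

/-- The multiplicity `m(W)` (the common value of the `m(W, w)`, `w ∈ W`). -/
def multW [Fintype V] (E : V → V → Prop) (ord : LinearOrder V) (W : Finset V) : ℕ :=
  letI := ord
  if h : W.Nonempty then multCount E ord W (W.min' h) else 0

end
open Classical Finset

noncomputable section AuxCount

variable {α : Type*} {β : Type*}

/-- prefix transfer: if `φ` semiconjugates `f` to `h` on `S`, then along a trajectory
staying in `S`, iterates correspond. -/
theorem iter_prefix (φ : α → β) (f : α → α) (h : β → β) (S : Finset α)
    (hc : ∀ y ∈ S, φ (f y) = h (φ y)) (x : α) :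
    ∀ m, (∀ k, k < m → f^[k] x ∈ S) → h^[m] (φ x) = φ (f^[m] x) := by
  intro m
  induction m with
  | zero => intro _; rfl
  | succ m ih =>
    intro hk
    rw [Function.iterate_succ_apply', Function.iterate_succ_apply',
      ih (fun k hk' => hk k (Nat.lt_succ_of_lt hk')), hc _ (hk m (Nat.lt_succ_self m))]

theorem iter_map (φ : α → β) (f : α → α) (h : β → β) (S : Finset α) (Q : Finset β)
    (hc : ∀ y ∈ S, φ (f y) = h (φ y)) (hmem : ∀ y, y ∈ S ↔ φ y ∈ Q) (x : α) :
    (∃ m, f^[m] x ∉ S) ↔ (∃ m, h^[m] (φ x) ∉ Q) := by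
  constructor
  · rintro hx
    refine ⟨Nat.find hx, ?_⟩
    rw [iter_prefix φ f h S hc x _ (fun k hk => by
      by_contra hns; exact absurd (Nat.find_le hns) (Nat.not_le.2 hk))]
    intro hq
    exact Nat.find_spec hx ((hmem _).2 hq)
  · rintro ⟨m, hm⟩
    by_contra hall
    push_neg at hall
    exact hm (by
      rw [iter_prefix φ f h S hc x m (fun k _ => hall k)]
      exact (hmem _).1 (hall m))

theorem iter_congr (f g : α → α) (S : Finset α)
    (hc : ∀ y ∈ S, f y = g y) (x : α) :
    (∃ m, f^[m] x ∉ S) ↔ (∃ m, g^[m] x ∉ S) :=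
  iter_map id f g S S (fun y hy => (hc y hy).symm ▸ rfl) (fun _ => Iff.rfl) x

/-- first exit time -/
theorem first_exit {f : α → α} {S : Finset α} {x : α} (hx : ∃ m, f^[m] x ∉ S) :
    ∃ m, f^[m] x ∉ S ∧ ∀ k, k < m → f^[k] x ∈ S :=
  ⟨Nat.find hx, Nat.find_spec hx, fun k hk => by
    by_contra hns; exact absurd (Nat.find_le hns) (Nat.not_le.2 hk)⟩

/-- periodicity: if the trajectory returns, it never exits. -/
theorem no_exit_of_period {f : α → α} {S : Finset α} {x : α} {p : ℕ} (hp : 0 < p)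
    (hret : f^[p] x = x) (hin : ∀ k, k < p → f^[k] x ∈ S) : ∀ m, f^[m] x ∈ S := by
  intro m
  have hq : ∀ q, f^[p * q] x = x := by
    intro q
    rw [Function.iterate_mul]
    exact Function.iterate_fixed hret q
  have h1 : f^[m] x = f^[m % p] (f^[p * (m / p)] x) := by
    rw [← Function.iterate_add_apply]
    congr 1
    exact (Nat.mod_add_div m p).symm
  rw [h1, hq]
  exact hin _ (Nat.mod_lt _ hp)

variable {T : Type*} [Fintype T]

/-- The set of "acyclic partial functions" supported on S. -/
def AcySet (S : Finset T) : Type _ :=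
  {h : T → T // (∀ x, x ∉ S → h x = x) ∧ (∀ x ∈ S, h x ≠ x) ∧ (∀ x, ∃ m, h^[m] x ∉ S)}

noncomputable instance (S : Finset T) : Fintype (AcySet S) := by
  unfold AcySet; infer_instance

/-- exit point of the trajectory of `y`. -/
def exitPt {S : Finset T} (h : AcySet S) (y : T) : T :=
  h.1^[Nat.find (h.2.2.2 y)] y

theorem exitPt_not_mem {S : Finset T} (h : AcySet S) (y : T) : exitPt h y ∉ S :=
  Nat.find_spec (h.2.2.2 y)

theorem exitPt_prefix {S : Finset T} (h : AcySet S) (y : T) :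
    ∀ k, k < Nat.find (h.2.2.2 y) → h.1^[k] y ∈ S := fun k hk => by
  by_contra hns; exact absurd (Nat.find_le hns) (Nat.not_le.2 hk)

end AuxCount

noncomputable section AuxCount2
set_option linter.unusedSectionVars false
variable {T : Type*} [Fintype T]

theorem swap_mem_iff {S' : Finset T} {t₁ t₂ : T} (h1 : t₁ ∉ S') (h2 : t₂ ∉ S') (z : T) :
    Equiv.swap t₁ t₂ z ∈ S' ↔ z ∈ S' := by
  rcases eq_or_ne z t₁ with rfl | hz1
  · rw [Equiv.swap_apply_left]; simp [h1, h2]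
  rcases eq_or_ne z t₂ with rfl | hz2
  · rw [Equiv.swap_apply_right]; simp [h1, h2]
  · rw [Equiv.swap_apply_of_ne_of_ne hz1 hz2]

/-- conjugation by a swap of two points outside `S'` -/
def conjA {S' : Finset T} (t₁ t₂ : T) (h1 : t₁ ∉ S') (h2 : t₂ ∉ S') (h : AcySet S') :
    AcySet S' := by
  classical
  refine ⟨fun x => Equiv.swap t₁ t₂ (h.1 (Equiv.swap t₁ t₂ x)), ?_, ?_, ?_⟩
  · intro x hx
    have hs : Equiv.swap t₁ t₂ x ∉ S' := fun hc => hx ((swap_mem_iff h1 h2 x).1 hc)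
    show Equiv.swap t₁ t₂ (h.1 (Equiv.swap t₁ t₂ x)) = x
    rw [h.2.1 _ hs, Equiv.swap_apply_self]
  · intro x hx hc
    have hσx : Equiv.swap t₁ t₂ x = x := Equiv.swap_apply_of_ne_of_ne
      (fun h' => h1 (h' ▸ hx)) (fun h' => h2 (h' ▸ hx))
    replace hc : Equiv.swap t₁ t₂ (h.1 (Equiv.swap t₁ t₂ x)) = x := hc
    rw [hσx] at hc
    have : h.1 x = Equiv.swap t₁ t₂ x := by
      have := congrArg (Equiv.swap t₁ t₂) hc
      rwa [Equiv.swap_apply_self] at this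
    rw [hσx] at this
    exact h.2.2.1 x hx this
  · intro x
    have hsc : Function.Semiconj (Equiv.swap t₁ t₂) h.1
        (fun x => Equiv.swap t₁ t₂ (h.1 (Equiv.swap t₁ t₂ x))) := by
      intro z
      show Equiv.swap t₁ t₂ (h.1 z)
        = Equiv.swap t₁ t₂ (h.1 (Equiv.swap t₁ t₂ (Equiv.swap t₁ t₂ z)))
      rw [Equiv.swap_apply_self]
    obtain ⟨m, hm⟩ := h.2.2.2 (Equiv.swap t₁ t₂ x)
    refine ⟨m, fun hc => hm ?_⟩
    have hit : (fun x => Equiv.swap t₁ t₂ (h.1 (Equiv.swap t₁ t₂ x)))^[m] x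
        = Equiv.swap t₁ t₂ (h.1^[m] (Equiv.swap t₁ t₂ x)) := by
      have h2' := (hsc.iterate_right m) (Equiv.swap t₁ t₂ x)
      rw [Equiv.swap_apply_self] at h2'
      exact h2'.symm
    rw [hit] at hc
    exact (swap_mem_iff h1 h2 _).1 hc

theorem conjA_exit {S' : Finset T} (t₁ t₂ : T) (h1 : t₁ ∉ S') (h2 : t₂ ∉ S')
    (h : AcySet S') {y : T} (hy : y ∈ S') :
    exitPt (conjA t₁ t₂ h1 h2 h) y = Equiv.swap t₁ t₂ (exitPt h y) := by
  classical
  have hσy : Equiv.swap t₁ t₂ y = y := Equiv.swap_apply_of_ne_of_ne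
    (fun h' => h1 (h' ▸ hy)) (fun h' => h2 (h' ▸ hy))
  have hsc : Function.Semiconj (Equiv.swap t₁ t₂) h.1 (conjA t₁ t₂ h1 h2 h).1 := by
    intro z
    show Equiv.swap t₁ t₂ (h.1 z)
      = Equiv.swap t₁ t₂ (h.1 (Equiv.swap t₁ t₂ (Equiv.swap t₁ t₂ z)))
    rw [Equiv.swap_apply_self]
  have hit : ∀ m, (conjA t₁ t₂ h1 h2 h).1^[m] y = Equiv.swap t₁ t₂ (h.1^[m] y) := by
    intro m
    have := (hsc.iterate_right m) y
    rw [hσy] at this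
    exact this.symm
  have hfind : Nat.find ((conjA t₁ t₂ h1 h2 h).2.2.2 y) = Nat.find (h.2.2.2 y) := by
    rw [Nat.find_eq_iff]
    constructor
    · rw [hit]
      intro hc
      exact exitPt_not_mem h y ((swap_mem_iff h1 h2 _).1 hc)
    · intro k hk hc
      rw [hit] at hc
      exact hc ((swap_mem_iff h1 h2 _).2 (exitPt_prefix h y k hk))
  rw [exitPt, hfind, hit]
  rfl

theorem conjA_invol {S' : Finset T} (t₁ t₂ : T) (h1 : t₁ ∉ S') (h2 : t₂ ∉ S')
    (h : AcySet S') : conjA t₁ t₂ h1 h2 (conjA t₁ t₂ h1 h2 h) = h := by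
  apply Subtype.ext
  funext z
  simp [conjA, Equiv.swap_apply_self]

theorem card_exit_fiber_eq {S' : Finset T} {t₁ t₂ : T} (h1 : t₁ ∉ S') (h2 : t₂ ∉ S')
    {y : T} (hy : y ∈ S') :
    Nat.card {h : AcySet S' // exitPt h y = t₁} =
      Nat.card {h : AcySet S' // exitPt h y = t₂} := by
  apply Nat.card_congr
  refine ⟨fun h => ⟨conjA t₁ t₂ h1 h2 h.1, ?_⟩, fun h => ⟨conjA t₁ t₂ h1 h2 h.1, ?_⟩,
    fun h => ?_, fun h => ?_⟩
  · rw [conjA_exit t₁ t₂ h1 h2 h.1 hy, h.2, Equiv.swap_apply_left]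
  · rw [conjA_exit t₁ t₂ h1 h2 h.1 hy, h.2, Equiv.swap_apply_right]
  · exact Subtype.ext (conjA_invol t₁ t₂ h1 h2 h.1)
  · exact Subtype.ext (conjA_invol t₁ t₂ h1 h2 h.1)

theorem card_A_eq {S' : Finset T} {x₀ : T} (hx₀ : x₀ ∉ S') {y : T} (hy : y ∈ S') :
    Nat.card (AcySet S') =
      (Fintype.card T - S'.card) * Nat.card {h : AcySet S' // exitPt h y = x₀} := by
  classical
  have hpart : Nat.card (AcySet S') =
      ∑ t : T, Nat.card {h : AcySet S' // exitPt h y = t} := by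
    rw [Nat.card_eq_fintype_card]
    rw [← Fintype.card_congr (Equiv.sigmaFiberEquiv (fun h : AcySet S' => exitPt h y))]
    rw [Fintype.card_sigma]
    simp [Nat.card_eq_fintype_card]
  rw [hpart]
  have hzero : ∀ t ∈ S', Nat.card {h : AcySet S' // exitPt h y = t} = 0 := by
    intro t ht
    rw [Nat.card_eq_fintype_card, Fintype.card_eq_zero_iff]
    exact ⟨fun h => (h.2 ▸ exitPt_not_mem h.1 y) ht⟩
  have hconst : ∀ t ∈ S'ᶜ, Nat.card {h : AcySet S' // exitPt h y = t} =
      Nat.card {h : AcySet S' // exitPt h y = x₀} := by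
    intro t ht
    exact card_exit_fiber_eq (Finset.mem_compl.1 ht) hx₀ hy
  rw [← Finset.sum_add_sum_compl S']
  rw [Finset.sum_congr rfl hzero, Finset.sum_congr rfl hconst]
  simp [Finset.card_compl, mul_comm]

end AuxCount2

noncomputable section AuxCount3
set_option linter.unusedSectionVars false
variable {T : Type*} [Fintype T]

theorem erase_props {S : Finset T} {x₀ : T} (hx₀ : x₀ ∈ S) :
    x₀ ∉ S.erase x₀ ∧ ∀ z, z ∈ S → z ∉ S.erase x₀ → z = x₀ := by
  refine ⟨Finset.notMem_erase x₀ S, fun z hz hz' => ?_⟩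
  by_contra hne
  exact hz' (Finset.mem_erase.2 ⟨hne, hz⟩)

/-- the map `h ↦ update h x₀ x₀` lands in `AcySet (S.erase x₀)`. -/
def toErased {S : Finset T} (x₀ : T) (hx₀ : x₀ ∈ S) (h : AcySet S) :
    AcySet (S.erase x₀) := by
  classical
  refine ⟨Function.update h.1 x₀ x₀, ?_, ?_, ?_⟩
  · intro x hx
    rcases eq_or_ne x x₀ with rfl | hne
    · rw [Function.update_self]
    · rw [Function.update_of_ne hne]
      exact h.2.1 x (fun hc => hx (Finset.mem_erase.2 ⟨hne, hc⟩))
  · intro x hx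
    rw [Function.update_of_ne (Finset.mem_erase.1 hx).1]
    exact h.2.2.1 x (Finset.mem_erase.1 hx).2
  · intro x
    have hx : ∃ m, h.1^[m] x ∉ S.erase x₀ := by
      obtain ⟨m, hm⟩ := h.2.2.2 x
      exact ⟨m, fun hc => hm (Finset.mem_of_mem_erase hc)⟩
    exact (iter_congr h.1 (Function.update h.1 x₀ x₀) (S.erase x₀)
      (fun z hz => (Function.update_of_ne (Finset.mem_erase.1 hz).1 _ _).symm) x).1 hx

/-- the map `h' ↦ update h' x₀ y` for `y ∉ S` lands in `AcySet S`. -/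
def ofErasedOut {S : Finset T} (x₀ : T) (hx₀ : x₀ ∈ S) {y : T} (hy : y ∉ S)
    (h' : AcySet (S.erase x₀)) : AcySet S := by
  classical
  refine ⟨Function.update h'.1 x₀ y, ?_, ?_, ?_⟩
  · intro x hx
    rw [Function.update_of_ne (fun hc => hx (by rw [hc]; exact hx₀))]
    exact h'.2.1 x (fun hc => hx (Finset.mem_of_mem_erase hc))
  · intro x hx
    rcases eq_or_ne x x₀ with rfl | hne
    · rw [Function.update_self]; exact fun hc => hy (by rw [hc]; exact hx)
    · rw [Function.update_of_ne hne]
      exact h'.2.2.1 x (Finset.mem_erase.2 ⟨hne, hx⟩)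
  · intro x
    obtain ⟨M, hM, hpre⟩ := first_exit (h'.2.2.2 x)
    have heq : (Function.update h'.1 x₀ y)^[M] x = h'.1^[M] x := by
      exact iter_prefix id h'.1 (Function.update h'.1 x₀ y) (S.erase x₀)
        (fun z hz => (Function.update_of_ne (Finset.mem_erase.1 hz).1 _ _).symm) x M hpre
    by_cases ht : h'.1^[M] x ∈ S
    · have hteq : h'.1^[M] x = x₀ := (erase_props hx₀).2 _ ht hM
      refine ⟨M + 1, ?_⟩
      rw [Function.iterate_succ_apply', heq, hteq, Function.update_self]
      exact hy
    · exact ⟨M, heq ▸ ht⟩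

theorem update_update {f : T → T} {x₀ : T} (a b : T) :
    Function.update (Function.update f x₀ a) x₀ b = Function.update f x₀ b := by
  classical
  funext z
  rcases eq_or_ne z x₀ with rfl | hne
  · rw [Function.update_self, Function.update_self]
  · rw [Function.update_of_ne hne, Function.update_of_ne hne, Function.update_of_ne hne]

/-- Equiv for fibers over `y ∉ S`. -/
def fiberOutEquiv {S : Finset T} (x₀ : T) (hx₀ : x₀ ∈ S) {y : T} (hy : y ∉ S) :
    {h : AcySet S // h.1 x₀ = y} ≃ AcySet (S.erase x₀) := by
  classical
  refine ⟨fun h => toErased x₀ hx₀ h.1, fun h' => ⟨ofErasedOut x₀ hx₀ hy h', ?_⟩, ?_, ?_⟩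
  · show Function.update h'.1 x₀ y x₀ = y
    exact Function.update_self _ _ _
  · rintro ⟨h, hh⟩
    apply Subtype.ext
    apply Subtype.ext
    show Function.update (Function.update h.1 x₀ x₀) x₀ y = h.1
    rw [update_update]
    funext z
    rcases eq_or_ne z x₀ with rfl | hne
    · rw [Function.update_self]; exact hh.symm
    · rw [Function.update_of_ne hne]
  · intro h'
    apply Subtype.ext
    show Function.update (Function.update h'.1 x₀ y) x₀ x₀ = h'.1
    rw [update_update]
    funext z
    rcases eq_or_ne z x₀ with rfl | hne
    · rw [Function.update_self]
      exact (h'.2.1 _ (Finset.notMem_erase _ _)).symm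
    · rw [Function.update_of_ne hne]

end AuxCount3

noncomputable section AuxCount4
set_option linter.unusedSectionVars false
set_option linter.unusedVariables false
variable {T : Type*} [Fintype T]

theorem toErased_exit_ne {S : Finset T} (x₀ : T) (hx₀ : x₀ ∈ S) {y : T}
    (hy : y ∈ S.erase x₀) (h : AcySet S) (hxy : h.1 x₀ = y) :
    exitPt (toErased x₀ hx₀ h) y ≠ x₀ := by
  classical
  intro hex
  set g := toErased x₀ hx₀ h with hg
  have hgh : ∀ z ∈ S.erase x₀, id (g.1 z) = h.1 (id z) := by
    intro z hz
    show g.1 z = h.1 z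
    exact Function.update_of_ne (Finset.mem_erase.1 hz).1 _ _
  set M := Nat.find (g.2.2.2 y) with hM
  have hpre : ∀ k, k < M → g.1^[k] y ∈ S.erase x₀ := exitPt_prefix g y
  have hMx : g.1^[M] y = x₀ := hex
  have hhM : h.1^[M] y = x₀ := by
    have h5 := iter_prefix id g.1 h.1 (S.erase x₀) hgh y M hpre
    simp only [id_eq] at h5
    rw [h5]; exact hMx
  have hper : h.1^[M + 1] x₀ = x₀ := by
    rw [Function.iterate_succ_apply, hxy, hhM]
  have hin : ∀ k, k < M + 1 → h.1^[k] x₀ ∈ S := by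
    intro k hk
    match k with
    | 0 => exact hx₀
    | (j+1) =>
      have hj : j < M := by omega
      have : h.1^[j+1] x₀ = h.1^[j] y := by rw [Function.iterate_succ_apply, hxy]
      have h6 := iter_prefix id g.1 h.1 (S.erase x₀) hgh y j
        (fun k hk' => hpre k (hk'.trans hj))
      simp only [id_eq] at h6
      rw [this, h6]
      exact Finset.mem_of_mem_erase (hpre j hj)
  obtain ⟨m, hm⟩ := h.2.2.2 x₀
  exact hm (no_exit_of_period (Nat.succ_pos M) hper hin m)

/-- the map `h' ↦ update h' x₀ y` for `y ∈ S.erase x₀` with exit ≠ x₀. -/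
def ofErasedIn {S : Finset T} (x₀ : T) (hx₀ : x₀ ∈ S) {y : T} (hy : y ∈ S.erase x₀)
    (h' : AcySet (S.erase x₀)) (hex : exitPt h' y ≠ x₀) : AcySet S := by
  classical
  refine ⟨Function.update h'.1 x₀ y, ?_, ?_, ?_⟩
  · intro x hx
    rw [Function.update_of_ne (fun hc => hx (by rw [hc]; exact hx₀))]
    exact h'.2.1 x (fun hc => hx (Finset.mem_of_mem_erase hc))
  · intro x hx
    rcases eq_or_ne x x₀ with rfl | hne
    · rw [Function.update_self]
      exact fun hc => (Finset.mem_erase.1 hy).1 hc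
    · rw [Function.update_of_ne hne]
      exact h'.2.2.1 x (Finset.mem_erase.2 ⟨hne, hx⟩)
  · intro x
    obtain ⟨M, hM, hpre⟩ := first_exit (h'.2.2.2 x)
    have hgh : ∀ z ∈ S.erase x₀, id (h'.1 z) = Function.update h'.1 x₀ y (id z) := by
      intro z hz
      exact (Function.update_of_ne (Finset.mem_erase.1 hz).1 _ _).symm
    have heq : (Function.update h'.1 x₀ y)^[M] x = h'.1^[M] x :=
      iter_prefix id h'.1 (Function.update h'.1 x₀ y) (S.erase x₀) hgh x M hpre
    by_cases ht : h'.1^[M] x ∈ S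
    · have hteq : h'.1^[M] x = x₀ := (erase_props hx₀).2 _ ht hM
      have hstep : (Function.update h'.1 x₀ y)^[M+1] x = y := by
        rw [Function.iterate_succ_apply', heq, hteq, Function.update_self]
      set M' := Nat.find (h'.2.2.2 y) with hM'
      have hyq : (Function.update h'.1 x₀ y)^[M'] y = exitPt h' y :=
        iter_prefix id h'.1 (Function.update h'.1 x₀ y) (S.erase x₀) hgh y M'
          (exitPt_prefix h' y)
      refine ⟨M' + (M + 1), ?_⟩
      rw [Function.iterate_add_apply, hstep, hyq]
      intro hc
      exact hex ((erase_props hx₀).2 _ hc (exitPt_not_mem h' y))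
    · exact ⟨M, heq ▸ ht⟩

/-- Equiv for fibers over `y ∈ S.erase x₀`. -/
def fiberInEquiv {S : Finset T} (x₀ : T) (hx₀ : x₀ ∈ S) {y : T} (hy : y ∈ S.erase x₀) :
    {h : AcySet S // h.1 x₀ = y} ≃ {h' : AcySet (S.erase x₀) // exitPt h' y ≠ x₀} := by
  classical
  refine ⟨fun h => ⟨toErased x₀ hx₀ h.1, toErased_exit_ne x₀ hx₀ hy h.1 h.2⟩,
    fun h' => ⟨ofErasedIn x₀ hx₀ hy h'.1 h'.2, ?_⟩, ?_, ?_⟩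
  · show Function.update h'.1.1 x₀ y x₀ = y
    exact Function.update_self _ _ _
  · rintro ⟨h, hh⟩
    apply Subtype.ext
    apply Subtype.ext
    show Function.update (Function.update h.1 x₀ x₀) x₀ y = h.1
    rw [update_update]
    funext z
    rcases eq_or_ne z x₀ with rfl | hne
    · rw [Function.update_self]; exact hh.symm
    · rw [Function.update_of_ne hne]
  · intro h'
    apply Subtype.ext
    apply Subtype.ext
    show Function.update (Function.update h'.1.1 x₀ y) x₀ x₀ = h'.1.1
    rw [update_update]
    funext z
    rcases eq_or_ne z x₀ with rfl | hne
    · rw [Function.update_self]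
      exact (h'.1.2.1 _ (Finset.notMem_erase _ _)).symm
    · rw [Function.update_of_ne hne]

end AuxCount4

noncomputable section AuxCount5
set_option linter.unusedSectionVars false
set_option linter.unusedVariables false
variable {T : Type*} [Fintype T]

theorem card_fiber_sum (S : Finset T) (x₀ : T) :
    Nat.card (AcySet S) = ∑ t : T, Nat.card {h : AcySet S // h.1 x₀ = t} := by
  classical
  rw [Nat.card_eq_fintype_card,
    ← Fintype.card_congr (Equiv.sigmaFiberEquiv (fun h : AcySet S => h.1 x₀)),
    Fintype.card_sigma]
  simp [Nat.card_eq_fintype_card]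

theorem card_acySet_base (x₀ : T) :
    Nat.card (AcySet ({x₀} : Finset T)) = Fintype.card T - 1 := by
  classical
  have he : AcySet ({x₀} : Finset T) ≃ {y : T // y ≠ x₀} := by
    refine ⟨fun h => ⟨h.1 x₀, h.2.2.1 x₀ (Finset.mem_singleton_self x₀)⟩,
      fun y => ⟨Function.update id x₀ y.1, ?_, ?_, ?_⟩, ?_, ?_⟩
    · intro x hx
      rw [Function.update_of_ne (fun hc => hx (by rw [hc]; exact Finset.mem_singleton_self x₀))]
      rfl
    · intro x hx
      rw [Finset.mem_singleton] at hx
      subst hx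
      rw [Function.update_self]
      exact y.2
    · intro x
      rcases eq_or_ne x x₀ with rfl | hne
      · refine ⟨1, ?_⟩
        simp only [Function.iterate_one, Function.update_self, Finset.mem_singleton]
        exact y.2
      · exact ⟨0, by simpa using hne⟩
    · intro h
      apply Subtype.ext
      show Function.update id x₀ (h.1 x₀) = h.1
      funext z
      rcases eq_or_ne z x₀ with rfl | hne
      · rw [Function.update_self]
      · rw [Function.update_of_ne hne]
        exact (h.2.1 z (by simpa using hne)).symm
    · intro y
      apply Subtype.ext
      show Function.update id x₀ y.1 x₀ = y.1
      exact Function.update_self _ _ _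
  rw [Nat.card_congr he, Nat.card_eq_fintype_card]
  have h2 : Fintype.card {y : T // ¬ y = x₀} =
      Fintype.card T - Fintype.card {y : T // y = x₀} :=
    Fintype.card_subtype_compl _
  rw [Fintype.card_subtype_eq] at h2
  exact h2

theorem card_acySet : ∀ (s : ℕ) (S : Finset T), S.card = s → 1 ≤ s →
    Nat.card (AcySet S) = (Fintype.card T - s) * Fintype.card T ^ (s - 1) := by
  classical
  intro s
  induction s with
  | zero => intro S _ h1; omega
  | succ s ih =>
    intro S hcard _
    have hSne : S.Nonempty := Finset.card_pos.1 (by omega)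
    obtain ⟨x₀, hx₀⟩ := hSne
    rcases Nat.eq_zero_or_pos s with rfl | hs
    · -- base case : |S| = 1
      have hsing : S = {x₀} := by
        obtain ⟨a, ha⟩ := Finset.card_eq_one.1 hcard
        rw [ha]
        rw [ha, Finset.mem_singleton] at hx₀
        rw [hx₀]
      rw [hsing, card_acySet_base x₀]
      simp
    · -- inductive step : |S| = s + 1, s ≥ 1
      have hsm : s + 1 ≤ Fintype.card T := hcard ▸ Finset.card_le_univ S
      have hcard' : (S.erase x₀).card = s := by
        rw [Finset.card_erase_of_mem hx₀, hcard]
        omega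
      have hA : Nat.card (AcySet (S.erase x₀)) =
          (Fintype.card T - s) * Fintype.card T ^ (s - 1) := ih (S.erase x₀) hcard' hs
      have hq : ∀ y ∈ S.erase x₀,
          Nat.card {h : AcySet (S.erase x₀) // exitPt h y = x₀} =
            Fintype.card T ^ (s - 1) := by
        intro y hy
        have h1 := card_A_eq (S' := S.erase x₀) (Finset.notMem_erase x₀ S) hy
        rw [hcard', hA] at h1
        exact (Nat.eq_of_mul_eq_mul_left (by omega) h1).symm
      have hfib0 : Nat.card {h : AcySet S // h.1 x₀ = x₀} = 0 := by
        rw [Nat.card_eq_fintype_card, Fintype.card_eq_zero_iff]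
        exact ⟨fun h => h.1.2.2.1 x₀ hx₀ h.2⟩
      have hfibout : ∀ t ∈ Sᶜ, Nat.card {h : AcySet S // h.1 x₀ = t} =
          (Fintype.card T - s) * Fintype.card T ^ (s - 1) := by
        intro t ht
        rw [Nat.card_congr (fiberOutEquiv x₀ hx₀ (Finset.mem_compl.1 ht))]
        exact hA
      have hfibin : ∀ t ∈ S.erase x₀, Nat.card {h : AcySet S // h.1 x₀ = t} =
          (Fintype.card T - s - 1) * Fintype.card T ^ (s - 1) := by
        intro t ht
        rw [Nat.card_congr (fiberInEquiv x₀ hx₀ ht)]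
        have h2 : Fintype.card {h' : AcySet (S.erase x₀) // ¬ exitPt h' t = x₀} =
            Fintype.card (AcySet (S.erase x₀)) -
              Fintype.card {h' : AcySet (S.erase x₀) // exitPt h' t = x₀} :=
          Fintype.card_subtype_compl _
        have h3 : Nat.card {h' : AcySet (S.erase x₀) // ¬ exitPt h' t = x₀} =
            Nat.card (AcySet (S.erase x₀)) -
              Nat.card {h' : AcySet (S.erase x₀) // exitPt h' t = x₀} := by
          simpa [Nat.card_eq_fintype_card] using h2
        rw [h3, hq t ht, hA]
        obtain ⟨k, hk⟩ : ∃ k, Fintype.card T - s = k + 1 :=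
          ⟨Fintype.card T - s - 1, by omega⟩
        rw [hk, Nat.succ_mul, Nat.add_sub_cancel, Nat.add_sub_cancel]
      rw [card_fiber_sum S x₀, ← Finset.sum_add_sum_compl S,
        ← Finset.add_sum_erase S _ hx₀,
        Finset.sum_congr rfl hfibin, Finset.sum_congr rfl hfibout, hfib0,
        Finset.sum_const, Finset.sum_const, hcard', Finset.card_compl, hcard,
        smul_eq_mul, smul_eq_mul]
      obtain ⟨k, hk⟩ : ∃ k, Fintype.card T = s + k + 1 :=
        ⟨Fintype.card T - s - 1, by omega⟩
      rw [hk]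
      rw [show s + 1 - 1 = (s - 1) + 1 from by omega]
      rw [show s + k + 1 - (s + 1) = k from by omega,
        show s + k + 1 - s - 1 = k from by omega,
        show s + k + 1 - s = k + 1 from by omega, pow_succ]
      ring

end AuxCount5

/-! ### Part A : analysis of the exploration algorithm on the complete digraph -/

section PartA
set_option linter.unusedSectionVars false
set_option linter.unusedVariables false

variable {n : ℕ}

/-- children of the root -/
def Cset (a : SpTree (fun i j : Fin n => i ≠ j)) : Finset (Fin n) :=
  univ.filter fun x => x ≠ a.root ∧ a.out x = a.root

/-- The invariant maintained by the exploration algorithm on `K_n`. -/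
def KInv (a : SpTree (fun i j : Fin n => i ≠ j)) (s : ExpState (Fin n)) : Prop :=
  ∃ (P : Finset (Fin n)) (L1 L2 : List (Fin n × Fin n)),
    s.Lq = L1 ++ L2 ∧
    a.root ∉ P ∧
    (∀ e ∈ L1, e.2 = a.root ∧ e.1 ∈ P) ∧
    (∀ x ∈ P, (x, a.root) ∈ L1) ∧
    (∀ e ∈ L2, a.out e.1 = e.2 → e.1 ∈ P) ∧
    (∀ e ∈ s.F, e.1 ≠ e.2 ∧ (e.1 ∈ P ∨ e.1 ∈ Cset a)) ∧
    s.A = insert a.root (Cset a \ P)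

def expMeasure (s : ExpState (Fin n)) : ℕ :=
  s.Lq.length + (n + 1) * (n - s.A.card)

theorem mem_sortedTo (ord : LinearOrder (Fin n)) (S : Finset (Fin n × Fin n))
    (u : Fin n) {e : Fin n × Fin n} (he : e ∈ sortedTo ord S u) :
    e.2 = u ∧ (e.1, u) ∈ S := by
  unfold sortedTo at he
  simp only [List.mem_map] at he
  obtain ⟨v, hv, rfl⟩ := he
  rw [Finset.mem_sort] at hv
  simp only [Finset.mem_image, Finset.mem_filter] at hv
  obtain ⟨f, ⟨hfS, hf2⟩, hf1⟩ := hv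
  refine ⟨rfl, ?_⟩
  have : f = (f.1, u) := by
    apply Prod.ext
    · rfl
    · exact hf2
  rw [← hf1, ← this]
  exact hfS

theorem length_sortedTo (ord : LinearOrder (Fin n)) (S : Finset (Fin n × Fin n))
    (u : Fin n) : (sortedTo ord S u).length ≤ n := by
  unfold sortedTo
  rw [List.length_map, Finset.length_sort]
  exact le_trans (Finset.card_le_univ _) (le_of_eq (by simp))

theorem expStep_nil {E : Fin n → Fin n → Prop} (ord : LinearOrder (Fin n))
    (a : SpTree E) (s : ExpState (Fin n)) (h : s.Lq = []) :
    expStep ord a s = s := by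
  cases s
  dsimp at h
  subst h
  rfl

theorem expStep_cons_pos {E : Fin n → Fin n → Prop} (ord : LinearOrder (Fin n))
    (a : SpTree E) (A : Finset (Fin n)) (e : Fin n × Fin n)
    (rest : List (Fin n × Fin n)) (F : Finset (Fin n × Fin n)) (Er : Finset (Fin n))
    (h : inTree a e) :
    expStep ord a ⟨A, e :: rest, F, Er⟩ =
      ⟨insert e.1 A, rest.filter (fun f => decide (f.1 ≠ e.1)) ++ sortedTo ord F e.1,
        F, Er⟩ := by
  unfold expStep
  simp only [if_pos h]
  congr 1
  · ext z; simp
  · refine congrArg₂ _ ?_ rfl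
    apply List.filter_congr
    intro f _
    exact decide_eq_decide.mpr Iff.rfl

theorem expStep_cons_neg {E : Fin n → Fin n → Prop} (ord : LinearOrder (Fin n))
    (a : SpTree E) (A : Finset (Fin n)) (e : Fin n × Fin n)
    (rest : List (Fin n × Fin n)) (F : Finset (Fin n × Fin n)) (Er : Finset (Fin n))
    (h : ¬ inTree a e) :
    expStep ord a ⟨A, e :: rest, F, Er⟩ =
      ⟨A, rest.filter (fun f => decide (f.1 ≠ e.1 ∧ f.2 ≠ e.1)),
        F.filter (fun f => f.1 ≠ e.1 ∧ f.2 ≠ e.1), insert e.1 Er⟩ := by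
  unfold expStep
  simp only [if_neg h]
  congr 1
  · apply List.filter_congr
    intro f _
    exact decide_eq_decide.mpr Iff.rfl
  · ext z; simp
  · ext z; simp

theorem step_inv (ord : LinearOrder (Fin n)) {a : SpTree (fun i j : Fin n => i ≠ j)}
    {s : ExpState (Fin n)} (hI : KInv a s) (hne : s.Lq ≠ []) :
    KInv a (expStep ord a s) ∧ expMeasure (expStep ord a s) < expMeasure s := by
  obtain ⟨P, L1, L2, hLq, hrP, hL1, hPL1, hL2, hF, hA⟩ := hI
  obtain ⟨A, Lq, F, Er⟩ := s
  dsimp only at hLq hF hA hne ⊢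
  subst hLq
  cases L1 with
  | nil =>
    cases L2 with
    | nil => simp at hne
    | cons e rest2 =>
      have hP : P = ∅ := by
        ext x
        simp only [Finset.notMem_empty, iff_false]
        intro hx
        simpa using hPL1 x hx
      have hnt : ¬ inTree a e := by
        rintro ⟨h1, h2⟩
        have := hL2 e (List.mem_cons_self) h2
        rw [hP] at this
        simp at this
      simp only [List.nil_append]
      rw [expStep_cons_neg ord a A e rest2 F Er hnt]
      constructor
      · refine ⟨∅, [], rest2.filter (fun f => decide (f.1 ≠ e.1 ∧ f.2 ≠ e.1)),
          (List.nil_append _).symm, by simp, by simp, by simp, ?_, ?_, ?_⟩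
        · intro f hf hout
          have := hL2 f (List.mem_cons_of_mem _ (List.mem_of_mem_filter hf)) hout
          rw [hP] at this
          simpa using this
        · intro f hf
          have hfF : f ∈ F := Finset.mem_of_mem_filter _ hf
          obtain ⟨h1, h2⟩ := hF f hfF
          refine ⟨h1, ?_⟩
          rw [hP] at h2
          simpa using h2
        · rw [hP] at hA
          exact hA
      · show (rest2.filter _).length + (n + 1) * (n - A.card) <
          (e :: rest2).length + (n + 1) * (n - A.card)
        apply Nat.add_lt_add_right
        have := List.length_filter_le (fun f => decide (f.1 ≠ e.1 ∧ f.2 ≠ e.1)) rest2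
        simp only [List.length_cons]
        omega
  | cons e rest1 =>
    have he2 : e.2 = a.root := (hL1 e (List.mem_cons_self)).1
    have he1P : e.1 ∈ P := (hL1 e (List.mem_cons_self)).2
    have he1r : e.1 ≠ a.root := fun hc => hrP (hc ▸ he1P)
    simp only [List.cons_append]
    by_cases hT : a.out e.1 = a.root
    · -- explore a child of the root
      have hTree : inTree a e := ⟨he1r, hT.trans he2.symm⟩
      rw [expStep_cons_pos ord a A e (rest1 ++ L2) F Er hTree]
      have he1C : e.1 ∈ Cset a := by
        simp only [Cset, Finset.mem_filter, Finset.mem_univ, true_and]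
        exact ⟨he1r, hT⟩
      have he1A : e.1 ∉ A := by
        rw [hA]
        simp only [Finset.mem_insert, Finset.mem_sdiff]
        rintro (hc | ⟨-, hc⟩)
        · exact he1r hc
        · exact hc he1P
      constructor
      · refine ⟨P.erase e.1, rest1.filter (fun f => decide (f.1 ≠ e.1)),
          (L2.filter (fun f => decide (f.1 ≠ e.1))) ++ sortedTo ord F e.1,
          by rw [List.filter_append, List.append_assoc], ?_, ?_, ?_, ?_, ?_, ?_⟩
        · exact fun hc => hrP (Finset.mem_of_mem_erase hc)
        · intro f hf
          have hfr : f ∈ rest1 := List.mem_of_mem_filter hf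
          have h1 := hL1 f (List.mem_cons_of_mem _ hfr)
          refine ⟨h1.1, Finset.mem_erase.2 ⟨?_, h1.2⟩⟩
          have := (List.mem_filter.1 hf).2
          simpa using this
        · intro x hx
          obtain ⟨hxne, hxP⟩ := Finset.mem_erase.1 hx
          have hmem := hPL1 x hxP
          rcases List.mem_cons.1 hmem with hc | hc
          · exact absurd (congrArg Prod.fst hc) hxne
          · exact List.mem_filter.2 ⟨hc, by simpa using hxne⟩
        · intro f hf hout
          rcases List.mem_append.1 hf with hf | hf
          · have hfL2 : f ∈ L2 := List.mem_of_mem_filter hf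
            have hf1 : f.1 ≠ e.1 := by simpa using (List.mem_filter.1 hf).2
            exact Finset.mem_erase.2 ⟨hf1, hL2 f hfL2 hout⟩
          · obtain ⟨hf2, hfF⟩ := mem_sortedTo ord F e.1 hf
            obtain ⟨hne', hPC⟩ := hF (f.1, e.1) hfF
            have hf1C : f.1 ∉ Cset a := by
              simp only [Cset, Finset.mem_filter, Finset.mem_univ, true_and]
              rintro ⟨-, hc⟩
              rw [hout, hf2] at hc
              exact he1r hc
            have hf1P : f.1 ∈ P := hPC.resolve_right hf1C
            exact Finset.mem_erase.2 ⟨hne', hf1P⟩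
        · intro f hf
          obtain ⟨hne', hPC⟩ := hF f hf
          refine ⟨hne', ?_⟩
          rcases hPC with hp | hc
          · rcases eq_or_ne f.1 e.1 with h' | h'
            · exact Or.inr (h' ▸ he1C)
            · exact Or.inl (Finset.mem_erase.2 ⟨h', hp⟩)
          · exact Or.inr hc
        · rw [hA]
          ext z
          simp only [Finset.mem_insert, Finset.mem_sdiff, Finset.mem_erase]
          constructor
          · rintro (rfl | rfl | ⟨hzC, hzP⟩)
            · exact Or.inr ⟨he1C, fun h => h.1 rfl⟩
            · exact Or.inl rfl
            · exact Or.inr ⟨hzC, fun h => hzP h.2⟩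
          · rintro (rfl | ⟨hzC, hz⟩)
            · exact Or.inr (Or.inl rfl)
            · rcases eq_or_ne z e.1 with rfl | hzne
              · exact Or.inl rfl
              · exact Or.inr (Or.inr ⟨hzC, fun hp => hz ⟨hzne, hp⟩⟩)
      · show (_ ++ _ : List _).length + (n + 1) * (n - (insert e.1 A).card) <
          (e :: (rest1 ++ L2)).length + (n + 1) * (n - A.card)
        have hlen1 := List.length_filter_le (fun f => decide (f.1 ≠ e.1)) (rest1 ++ L2)
        have hlen2 := length_sortedTo ord F e.1
        have hcardA : (insert e.1 A).card = A.card + 1 :=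
          Finset.card_insert_of_notMem he1A
        have hcardle : A.card + 1 ≤ n := by
          rw [← hcardA]
          exact le_trans (Finset.card_le_univ _) (le_of_eq (by simp))
        rw [List.length_append, List.length_cons, hcardA]
        have hsub : n - A.card = (n - (A.card + 1)) + 1 := by omega
        rw [hsub, Nat.mul_succ]
        generalize (n + 1) * (n - (A.card + 1)) = Y
        omega
    · -- erase a non-child
      have hnt : ¬ inTree a e := fun h => hT (h.2.trans he2)
      rw [expStep_cons_neg ord a A e (rest1 ++ L2) F Er hnt]
      have he1C : e.1 ∉ Cset a := by
        simp only [Cset, Finset.mem_filter, Finset.mem_univ, true_and]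
        rintro ⟨-, hc⟩
        exact hT hc
      constructor
      · refine ⟨P.erase e.1, rest1.filter (fun f => decide (f.1 ≠ e.1 ∧ f.2 ≠ e.1)),
          L2.filter (fun f => decide (f.1 ≠ e.1 ∧ f.2 ≠ e.1)),
          by rw [List.filter_append], ?_, ?_, ?_, ?_, ?_, ?_⟩
        · exact fun hc => hrP (Finset.mem_of_mem_erase hc)
        · intro f hf
          have hfr : f ∈ rest1 := List.mem_of_mem_filter hf
          have h1 := hL1 f (List.mem_cons_of_mem _ hfr)
          have h2 : f.1 ≠ e.1 ∧ f.2 ≠ e.1 := by simpa using (List.mem_filter.1 hf).2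
          exact ⟨h1.1, Finset.mem_erase.2 ⟨h2.1, h1.2⟩⟩
        · intro x hx
          obtain ⟨hxne, hxP⟩ := Finset.mem_erase.1 hx
          have hmem := hPL1 x hxP
          rcases List.mem_cons.1 hmem with hc | hc
          · exact absurd (congrArg Prod.fst hc) hxne
          · refine List.mem_filter.2 ⟨hc, ?_⟩
            have : a.root ≠ e.1 := fun hc' => he1r hc'.symm
            simp [hxne, this]
        · intro f hf hout
          have hfL2 : f ∈ L2 := List.mem_of_mem_filter hf
          have h2 : f.1 ≠ e.1 ∧ f.2 ≠ e.1 := by simpa using (List.mem_filter.1 hf).2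
          exact Finset.mem_erase.2 ⟨h2.1, hL2 f hfL2 hout⟩
        · intro f hf
          obtain ⟨hfF, h2⟩ := Finset.mem_filter.1 hf
          obtain ⟨hne', hPC⟩ := hF f hfF
          refine ⟨hne', ?_⟩
          rcases hPC with hp | hc
          · exact Or.inl (Finset.mem_erase.2 ⟨h2.1, hp⟩)
          · exact Or.inr hc
        · rw [hA]
          ext z
          simp only [Finset.mem_insert, Finset.mem_sdiff, Finset.mem_erase]
          constructor
          · rintro (rfl | ⟨hzC, hzP⟩)
            · exact Or.inl rfl
            · exact Or.inr ⟨hzC, fun h => hzP h.2⟩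
          · rintro (rfl | ⟨hzC, hz⟩)
            · exact Or.inl rfl
            · refine Or.inr ⟨hzC, fun hp => hz ⟨?_, hp⟩⟩
              exact fun hc => he1C (hc ▸ hzC)
      · show (_ : List _).length + (n + 1) * (n - A.card) <
          (e :: (rest1 ++ L2)).length + (n + 1) * (n - A.card)
        apply Nat.add_lt_add_right
        have := List.length_filter_le (fun f => decide (f.1 ≠ e.1 ∧ f.2 ≠ e.1)) (rest1 ++ L2)
        simp only [List.length_cons]
        omega

theorem init_inv (ord : LinearOrder (Fin n)) (a : SpTree (fun i j : Fin n => i ≠ j)) :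
    KInv a (expInit ord a) := by
  refine ⟨univ.filter (· ≠ a.root), (expInit ord a).Lq, [],
    (List.append_nil _).symm, by simp, ?_, ?_, by simp, ?_, ?_⟩
  · intro e he
    unfold expInit at he
    simp only [List.mem_map, Finset.mem_sort, Finset.mem_filter, Finset.mem_univ,
      true_and] at he
    obtain ⟨u, hu, rfl⟩ := he
    refine ⟨rfl, ?_⟩
    simp only [Finset.mem_filter, Finset.mem_univ, true_and]
    exact hu
  · intro x hx
    simp only [Finset.mem_filter, Finset.mem_univ, true_and] at hx
    unfold expInit
    simp only [List.mem_map, Finset.mem_sort, Finset.mem_filter, Finset.mem_univ,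
      true_and]
    exact ⟨x, hx, rfl⟩
  · intro e he
    unfold expInit at he
    simp only [Finset.mem_filter, Finset.mem_univ, true_and] at he
    exact ⟨he.1, Or.inl (by simp [he.2])⟩
  · show ({a.root} : Finset (Fin n)) = insert a.root (Cset a \ univ.filter (· ≠ a.root))
    have hempty : Cset a \ univ.filter (· ≠ a.root) = ∅ := by
      ext z
      simp only [Finset.mem_sdiff, Finset.mem_filter, Finset.mem_univ, true_and,
        Finset.notMem_empty, iff_false, Cset]
      rintro ⟨⟨hz1, -⟩, hz2⟩
      exact hz2 hz1
    rw [hempty]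
    simp

theorem init_measure (ord : LinearOrder (Fin n)) (a : SpTree (fun i j : Fin n => i ≠ j)) :
    expMeasure (expInit ord a) ≤ 2 * Fintype.card (Fin n × Fin n) + 1 := by
  have hlen : (expInit ord a).Lq.length ≤ n := by
    unfold expInit
    simp only [List.length_map, Finset.length_sort]
    exact le_trans (Finset.card_le_univ _) (le_of_eq (by simp))
  have hcard : (expInit ord a).A.card = 1 := by
    unfold expInit
    exact Finset.card_singleton _
  have h3 : (n + 1) * (n - 1) ≤ n * n := by
    rcases n with _ | d
    · simp
    · simp only [Nat.succ_sub_one]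
      nlinarith
  have h4 : n ≤ n * n + 1 := by
    rcases n with _ | d
    · simp
    · nlinarith
  unfold expMeasure
  rw [hcard]
  simp only [Fintype.card_prod, Fintype.card_fin]
  calc (expInit ord a).Lq.length + (n + 1) * (n - 1) ≤ n + n * n :=
        Nat.add_le_add hlen h3
    _ ≤ (n * n + 1) + n * n := Nat.add_le_add_right h4 _
    _ = 2 * (n * n) + 1 := by ring

theorem run_empty (ord : LinearOrder (Fin n)) (a : SpTree (fun i j : Fin n => i ≠ j)) :
    ∀ (k : ℕ) (s : ExpState (Fin n)), KInv a s → expMeasure s ≤ k →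
      KInv a ((expStep ord a)^[k] s) ∧ ((expStep ord a)^[k] s).Lq = [] := by
  intro k
  induction k with
  | zero =>
    intro s hI hμ
    have hnil : s.Lq = [] := by
      apply List.eq_nil_of_length_eq_zero
      unfold expMeasure at hμ
      omega
    simpa [Function.iterate_zero] using ⟨hI, hnil⟩
  | succ k ih =>
    intro s hI hμ
    by_cases hLq : s.Lq = []
    · rw [Function.iterate_fixed (expStep_nil ord a s hLq)]
      exact ⟨hI, hLq⟩
    · rw [Function.iterate_succ_apply]
      obtain ⟨hI', hμ'⟩ := step_inv ord hI hLq
      exact ih _ hI' (by omega)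

theorem phi_eq (ord : LinearOrder (Fin n)) (a : SpTree (fun i j : Fin n => i ≠ j)) :
    expPhi ord a = insert a.root (Cset a) := by
  obtain ⟨hI, hnil⟩ := run_empty ord a (2 * Fintype.card (Fin n × Fin n) + 1)
    (expInit ord a) (init_inv ord a) (init_measure ord a)
  obtain ⟨P, L1, L2, hLq, hrP, hL1, hPL1, hL2, hF, hA⟩ := hI
  have hL1nil : L1 = [] := by
    rw [hnil] at hLq
    exact (List.append_eq_nil_iff.1 hLq.symm).1
  have hP : P = ∅ := by
    ext x
    simp only [Finset.notMem_empty, iff_false]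
    intro hx
    have := hPL1 x hx
    rw [hL1nil] at this
    simp at this
  unfold expPhi expRun
  rw [hA, hP]
  simp

theorem psi_eq (ord : LinearOrder (Fin n)) (a : SpTree (fun i j : Fin n => i ≠ j)) :
    expPsi ord a = insert a.root (Cset a) := by
  have hphi := phi_eq ord a
  unfold expPsi
  ext u
  simp only [Finset.mem_filter, Finset.mem_univ, true_and]
  rw [hphi]
  constructor
  · exact fun h => h.1
  · intro hu
    have hroot : a.root ∈ insert a.root (Cset a) := Finset.mem_insert_self _ _
    refine ⟨hu, ?_, ?_⟩
    · rcases eq_or_ne a.root u with rfl | hne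
      · exact Relation.ReflTransGen.refl
      · exact Relation.ReflTransGen.single ⟨hne, hroot, hu⟩
    · rcases eq_or_ne u a.root with rfl | hne
      · exact Relation.ReflTransGen.refl
      · exact Relation.ReflTransGen.single ⟨hne, hu, hroot⟩

end PartA

/-! ### Part B : counting the trees -/

section PartB
set_option linter.unusedSectionVars false
set_option linter.unusedVariables false

variable {n : ℕ}

def equiv1 (ord : LinearOrder (Fin n)) (W : Finset (Fin n)) (w : Fin n) :
    {a : SpTree (fun i j : Fin n => i ≠ j) // a.root = w ∧ expPsi ord a = W} ≃
    {f : Fin n → Fin n // f w = w ∧ (∀ v, v ≠ w → f v ≠ v) ∧ (∀ v, ∃ m, f^[m] v = w) ∧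
      insert w (univ.filter fun x => x ≠ w ∧ f x = w) = W} := by
  refine ⟨fun a => ⟨a.1.out, ?_, ?_, ?_, ?_⟩,
    fun f => ⟨⟨w, f.1, f.2.1, fun v hv => (f.2.2.1 v hv).symm, fun v => f.2.2.2.1 v⟩,
      rfl, ?_⟩,
    fun a => ?_, fun f => ?_⟩
  · obtain ⟨b, hb, h2⟩ := a
    subst hb
    exact b.out_root
  · intro v hv
    obtain ⟨b, hb, h2⟩ := a
    subst hb
    exact (b.edge_mem v hv).symm
  · intro v
    obtain ⟨b, hb, h2⟩ := a
    subst hb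
    exact b.reach v
  · obtain ⟨b, hb, h2⟩ := a
    subst hb
    rw [psi_eq] at h2
    exact h2
  · rw [psi_eq]
    exact f.2.2.2.2
  · obtain ⟨b, hb, h2⟩ := a
    subst hb
    apply Subtype.ext
    apply SpTree.ext' rfl rfl
  · apply Subtype.ext
    rfl

def equiv2 (W : Finset (Fin n)) (w : Fin n) (hw : w ∈ W) :
    {f : Fin n → Fin n // f w = w ∧ (∀ v, v ≠ w → f v ≠ v) ∧ (∀ v, ∃ m, f^[m] v = w) ∧
      insert w (univ.filter fun x => x ≠ w ∧ f x = w) = W} ≃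
    {g : Fin n → Fin n // (∀ x, x ∉ (Wᶜ : Finset (Fin n)) → g x = x) ∧
      (∀ x ∈ (Wᶜ : Finset (Fin n)), g x ≠ x ∧ g x ≠ w) ∧
      (∀ x, ∃ m, g^[m] x ∉ (Wᶜ : Finset (Fin n)))} := by
  classical
  have hwS : w ∉ (Wᶜ : Finset (Fin n)) := by simp [hw]
  have hval : ∀ (f : Fin n → Fin n),
      insert w (univ.filter fun x => x ≠ w ∧ f x = w) = W →
      ∀ z ∈ W, z ≠ w → f z = w := by
    intro f hset z hz hzw
    rw [← hset] at hz
    rcases Finset.mem_insert.1 hz with hc | hc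
    · exact absurd hc hzw
    · exact (Finset.mem_filter.1 hc).2.2
  have hnval : ∀ (f : Fin n → Fin n),
      insert w (univ.filter fun x => x ≠ w ∧ f x = w) = W →
      ∀ z ∈ (Wᶜ : Finset (Fin n)), f z ≠ w := by
    intro f hset z hz hc
    have hzw : z ≠ w := fun h => hwS (h ▸ hz)
    have : z ∈ insert w (univ.filter fun x => x ≠ w ∧ f x = w) :=
      Finset.mem_insert.2 (Or.inr (Finset.mem_filter.2 ⟨Finset.mem_univ _, hzw, hc⟩))
    rw [hset] at this
    exact (Finset.mem_compl.1 hz) this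
  refine ⟨fun f => ⟨fun v => if v ∈ (Wᶜ : Finset (Fin n)) then f.1 v else v, ?_, ?_, ?_⟩,
    fun g => ⟨fun v => if v ∈ (Wᶜ : Finset (Fin n)) then g.1 v else w, ?_, ?_, ?_, ?_⟩,
    fun f => ?_, fun g => ?_⟩
  · intro x hx
    exact if_neg hx
  · intro x hx
    simp only []
    rw [if_pos hx]
    have hxw : x ≠ w := fun h => hwS (h ▸ hx)
    exact ⟨f.2.2.1 x hxw, hnval f.1 f.2.2.2.2 x hx⟩
  · intro x
    obtain ⟨m, hm⟩ := f.2.2.2.1 x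
    refine (iter_congr f.1 _ (Wᶜ : Finset (Fin n))
      (fun z hz => (if_pos hz).symm) x).1 ⟨m, ?_⟩
    rw [hm]
    exact hwS
  · -- invFun : f w = w
    show (if w ∈ (Wᶜ : Finset (Fin n)) then g.1 w else w) = w
    rw [if_neg hwS]
  · -- invFun : v ≠ w → f v ≠ v
    intro v hv
    show (if v ∈ (Wᶜ : Finset (Fin n)) then g.1 v else w) ≠ v
    by_cases hvS : v ∈ (Wᶜ : Finset (Fin n))
    · rw [if_pos hvS]; exact (g.2.2.1 v hvS).1
    · rw [if_neg hvS]; exact fun hc => hv hc.symm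
  · -- invFun : reach
    intro v
    by_cases hvS : v ∈ (Wᶜ : Finset (Fin n))
    · obtain ⟨M, hM, hpre⟩ := first_exit (g.2.2.2 v)
      have heq : (fun v => if v ∈ (Wᶜ : Finset (Fin n)) then g.1 v else w)^[M] v =
          g.1^[M] v :=
        iter_prefix id g.1 _ (Wᶜ : Finset (Fin n))
          (fun z hz => (if_pos hz).symm) v M hpre
      refine ⟨M + 1, ?_⟩
      rw [Function.iterate_succ_apply', heq]
      show (if g.1^[M] v ∈ (Wᶜ : Finset (Fin n)) then _ else w) = w
      rw [if_neg hM]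
    · refine ⟨1, ?_⟩
      simp only [Function.iterate_one]
      show (if v ∈ (Wᶜ : Finset (Fin n)) then g.1 v else w) = w
      rw [if_neg hvS]
  · -- invFun : set equation
    ext z
    simp only [Finset.mem_insert, Finset.mem_filter, Finset.mem_univ, true_and]
    constructor
    · rintro (rfl | ⟨hzw, hfz⟩)
      · exact hw
      · by_cases hz : z ∈ (Wᶜ : Finset (Fin n))
        · rw [if_pos hz] at hfz
          exact absurd hfz (g.2.2.1 z hz).2
        · exact Finset.notMem_compl.1 hz
    · intro hzW
      rcases eq_or_ne z w with rfl | hzw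
      · exact Or.inl rfl
      · refine Or.inr ⟨hzw, ?_⟩
        show (if z ∈ (Wᶜ : Finset (Fin n)) then g.1 z else w) = w
        rw [if_neg (by simp [hzW])]
  · -- left inverse
    apply Subtype.ext
    funext z
    show (if z ∈ (Wᶜ : Finset (Fin n)) then
      (if z ∈ (Wᶜ : Finset (Fin n)) then f.1 z else z) else w) = f.1 z
    by_cases hz : z ∈ (Wᶜ : Finset (Fin n))
    · rw [if_pos hz, if_pos hz]
    · rw [if_neg hz]
      have hzW : z ∈ W := Finset.notMem_compl.1 hz
      rcases eq_or_ne z w with rfl | hzw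
      · exact f.2.1.symm
      · exact (hval f.1 f.2.2.2.2 z hzW hzw).symm
  · -- right inverse
    apply Subtype.ext
    funext z
    show (if z ∈ (Wᶜ : Finset (Fin n)) then
      (if z ∈ (Wᶜ : Finset (Fin n)) then g.1 z else w) else z) = g.1 z
    by_cases hz : z ∈ (Wᶜ : Finset (Fin n))
    · rw [if_pos hz, if_pos hz]
    · rw [if_neg hz]
      exact (g.2.1 z hz).symm

def equiv3 (W : Finset (Fin n)) (w : Fin n) (hw : w ∈ W) :
    {g : Fin n → Fin n // (∀ x, x ∉ (Wᶜ : Finset (Fin n)) → g x = x) ∧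
      (∀ x ∈ (Wᶜ : Finset (Fin n)), g x ≠ x ∧ g x ≠ w) ∧
      (∀ x, ∃ m, g^[m] x ∉ (Wᶜ : Finset (Fin n)))} ≃
    AcySet ((Wᶜ : Finset (Fin n)).subtype (fun v => v ≠ w)) := by
  classical
  have hwS : w ∉ (Wᶜ : Finset (Fin n)) := by simp [hw]
  have hmem : ∀ y : {v : Fin n // v ≠ w},
      y ∈ (Wᶜ : Finset (Fin n)).subtype (fun v => v ≠ w) ↔
        y.1 ∈ (Wᶜ : Finset (Fin n)) := fun y => Finset.mem_subtype
  refine ⟨fun g => ⟨fun x => ⟨g.1 x.1, ?_⟩, ?_, ?_, ?_⟩,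
    fun h => ⟨fun v => if hv : v = w then v else (h.1 ⟨v, hv⟩).1, ?_, ?_, ?_⟩,
    fun g => ?_, fun h => ?_⟩
  · -- value avoids w
    by_cases hx : x.1 ∈ (Wᶜ : Finset (Fin n))
    · exact (g.2.2.1 x.1 hx).2
    · rw [g.2.1 x.1 hx]; exact x.2
  · -- fixes off S'
    intro x hx
    apply Subtype.ext
    show g.1 x.1 = x.1
    exact g.2.1 x.1 (fun hc => hx ((hmem x).2 hc))
  · -- moves on S'
    intro x hx hc
    exact (g.2.2.1 x.1 ((hmem x).1 hx)).1 (congrArg Subtype.val hc)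
  · -- exits
    intro x
    exact (iter_map (fun y : {v : Fin n // v ≠ w} => y.1) _ g.1 _ (Wᶜ : Finset (Fin n))
      (fun y hy => rfl) hmem x).2 (g.2.2.2 x.1)
  · -- invFun fixes off S
    intro x hx
    show (if hv : x = w then x else (h.1 ⟨x, hv⟩).1) = x
    by_cases hxw : x = w
    · rw [dif_pos hxw]
    · rw [dif_neg hxw]
      have : (⟨x, hxw⟩ : {v : Fin n // v ≠ w}) ∉
          (Wᶜ : Finset (Fin n)).subtype (fun v => v ≠ w) :=
        fun hc => hx ((hmem _).1 hc)
      rw [h.2.1 _ this]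
  · -- invFun moves on S
    intro x hx
    have hxw : x ≠ w := fun hc => hwS (hc ▸ hx)
    show (if hv : x = w then x else (h.1 ⟨x, hv⟩).1) ≠ x ∧
      (if hv : x = w then x else (h.1 ⟨x, hv⟩).1) ≠ w
    rw [dif_neg hxw]
    refine ⟨?_, (h.1 ⟨x, hxw⟩).2⟩
    intro hc
    exact h.2.2.1 ⟨x, hxw⟩ ((hmem _).2 hx) (Subtype.ext hc)
  · -- invFun exits
    intro x
    rcases eq_or_ne x w with rfl | hxw
    · exact ⟨0, hwS⟩
    · have hc : ∀ y ∈ (Wᶜ : Finset (Fin n)).subtype (fun v => v ≠ w),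
          (h.1 y).1 = (fun v => if hv : v = w then v else (h.1 ⟨v, hv⟩).1) y.1 := by
        intro y hy
        show (h.1 y).1 = if hv : y.1 = w then y.1 else (h.1 ⟨y.1, hv⟩).1
        rw [dif_neg y.2]
      exact (iter_map (fun y : {v : Fin n // v ≠ w} => y.1) h.1 _ _
        (Wᶜ : Finset (Fin n)) hc hmem ⟨x, hxw⟩).1 (h.2.2.2 ⟨x, hxw⟩)
  · -- left inverse
    apply Subtype.ext
    funext v
    show (if hv : v = w then v else (g.1 v : Fin n)) = g.1 v
    by_cases hv : v = w
    · rw [dif_pos hv, hv]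
      exact (g.2.1 w hwS).symm
    · rw [dif_neg hv]
  · -- right inverse
    apply Subtype.ext
    funext x
    apply Subtype.ext
    show (if hv : x.1 = w then x.1 else (h.1 ⟨x.1, hv⟩).1) = (h.1 x).1
    rw [dif_neg x.2]

end PartB
/-- In the complete digraph `K_n` (`n ≥ 2`), with any total
ordering of the vertices, for every subset `W` with `1 ≤ |W| = k ≤ n−1` and every
`w ∈ W`, the multiplicity satisfies `m(W, w) = (k−1)·(n−1)^{n−k−1}`. -/
theorem statement15 (n : ℕ) (hn : 2 ≤ n) (ord : LinearOrder (Fin n))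
    (W : Finset (Fin n)) (hk1 : 1 ≤ W.card) (hk2 : W.card ≤ n - 1)
    (w : Fin n) (hw : w ∈ W) :
    multCount (fun i j : Fin n => i ≠ j) ord W w =
      (W.card - 1) * (n - 1) ^ (n - W.card - 1) := by
  classical
  have hwS : w ∉ (Wᶜ : Finset (Fin n)) := by simp [hw]
  have hcompl : (Wᶜ : Finset (Fin n)).card = n - W.card := by
    rw [Finset.card_compl, Fintype.card_fin]
  have hS' : ((Wᶜ : Finset (Fin n)).subtype (fun v => v ≠ w)).card = n - W.card := by
    rw [Finset.card_subtype]
    rw [Finset.filter_true_of_mem]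
    · exact hcompl
    · intro x hx hc
      exact hwS (by rw [← hc]; exact hx)
  have hT : Fintype.card {v : Fin n // v ≠ w} = n - 1 := by
    have h2 : Fintype.card {v : Fin n // ¬ v = w} =
        Fintype.card (Fin n) - Fintype.card {v : Fin n // v = w} :=
      Fintype.card_subtype_compl _
    rw [Fintype.card_subtype_eq, Fintype.card_fin] at h2
    exact h2
  rw [multCount]
  rw [Nat.card_congr ((equiv1 ord W w).trans ((equiv2 W w hw).trans (equiv3 W w hw)))]
  rw [card_acySet ((Wᶜ : Finset (Fin n)).subtype (fun v => v ≠ w)).card _ rfl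
    (by rw [hS']; omega)]
  rw [hS', hT]
  rw [show n - 1 - (n - W.card) = W.card - 1 from by omega]
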